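/- arXiv:2301.05414 — 4 statements merged into one kernel-verified Lean document; each statement's English description precedes it below -/
import Mathlib

section
/- (Proposition: LFI 1.1.) Let ℓ > 0. Suppose L_{(2N−1)a}(q), N = 1,…,ℓ, are smooth generalized Killing vectors of Γ satisfying (L_{(2k−1)b}Q^b)_{,a} = −2k(2k+1) L_{(2k+1)a} for k = 1,…,ℓ−1 (when ℓ > 1), G(q) is a smooth function with L_{(1)a} = −G_{,a}, and s₁ = L_{(2ℓ−1)a}Q^a is constant. Then I = Σ_{N=1}^{ℓ} t^{2N−1} L_{(2N−1)a} q̇^a + s₁ t^{2ℓ}/(2ℓ) + Σ_{N=1}^{ℓ−1} (L_{(2N−1)a}Q^a) t^{2N}/(2N) + G(q) is a first integral of q̈^a = −Γ^a_{bc}q̇^bq̇^c − Q^a. -/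
noncomputable section
open scoped BigOperators

/-- Points of the configuration space `ℝ^D`. -/
abbrev Vec (D : ℕ) := Fin D → ℝ

/-- Connection coefficients: `Γ q a b c = Γ^a_{bc}(q)`. -/
abbrev Conn (D : ℕ) := Vec D → Fin D → Fin D → Fin D → ℝ

/-- Partial derivative `∂f/∂q^j`. -/
def pd {D : ℕ} (j : Fin D) (f : Vec D → ℝ) (q : Vec D) : ℝ :=
  fderiv ℝ f q (Pi.single j 1)

/-- Covariant derivative of a covector field:
`L_{a|b} = ∂L_a/∂q^b − Γ^s_{ab} L_s`. -/
def covD1 {D : ℕ} (Γ : Conn D) (L : Vec D → Fin D → ℝ) (q : Vec D) (a b : Fin D) : ℝ :=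
  pd b (fun p => L p a) q - ∑ s, Γ q s a b * L q s

/-- Generalized Killing vector: `L_{(a|b)} = 0`. -/
def IsGenKV {D : ℕ} (Γ : Conn D) (L : Vec D → Fin D → ℝ) : Prop :=
  ∀ q a b, covD1 Γ L q a b + covD1 Γ L q b a = 0

/-- `q, v` solve `q̈^a = -Γ^a_{bc}(q) q̇^b q̇^c - Q^a(q)` on the set `s ⊆ ℝ`. -/
def IsSolutionOn {D : ℕ} (Γ : Conn D) (Q : Vec D → Fin D → ℝ)
    (s : Set ℝ) (q v : ℝ → Vec D) : Prop :=
  ∀ t ∈ s, ∀ a : Fin D,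
    HasDerivAt (fun τ => q τ a) (v t a) t ∧
    HasDerivAt (fun τ => v τ a)
      (-(∑ b, ∑ c, Γ (q t) a b c * v t b * v t c) - Q (q t) a) t

/-- `I(t,q,q̇)` is a first integral of the system: it is constant along every
(C²) solution defined on an open interval. -/
def FirstIntegral {D : ℕ} (Γ : Conn D) (Q : Vec D → Fin D → ℝ)
    (I : ℝ → Vec D → Vec D → ℝ) : Prop :=
  ∀ (a b : ℝ) (q v : ℝ → Vec D), IsSolutionOn Γ Q (Set.Ioo a b) q v →
    ∀ t₁ ∈ Set.Ioo a b, ∀ t₂ ∈ Set.Ioo a b,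
      I t₁ (q t₁) (v t₁) = I t₂ (q t₂) (v t₂)

lemma killing_alg {D : ℕ} (Γ : Conn D) (M : Vec D → Fin D → ℝ) (p : Vec D) (w : Vec D)
    (Qp : Fin D → ℝ)
    (hKV : ∀ x b, covD1 Γ M p x b + covD1 Γ M p b x = 0) :
    ∑ x, ((∑ b, pd b (fun p' => M p' x) p * w b) * w x
        + M p x * (-(∑ b, ∑ c, Γ p x b c * w b * w c) - Qp x))
      = -(∑ x, M p x * Qp x) := by
  have key : ∑ x, ∑ b, covD1 Γ M p x b * (w x * w b) = 0 := by
    have h2 : (∑ x, ∑ b, covD1 Γ M p x b * (w x * w b)) * 2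
        = ∑ x, ∑ b, (covD1 Γ M p x b + covD1 Γ M p b x) * (w x * w b) := by
      have hswap : ∑ x, ∑ b, covD1 Γ M p x b * (w x * w b)
          = ∑ x, ∑ b, covD1 Γ M p b x * (w x * w b) := by
        rw [Finset.sum_comm]
        exact Finset.sum_congr rfl fun x _ => Finset.sum_congr rfl fun b _ => by ring
      calc (∑ x, ∑ b, covD1 Γ M p x b * (w x * w b)) * 2
          = (∑ x, ∑ b, covD1 Γ M p x b * (w x * w b))
            + (∑ x, ∑ b, covD1 Γ M p b x * (w x * w b)) := by rw [← hswap]; ring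
        _ = ∑ x, ∑ b, (covD1 Γ M p x b + covD1 Γ M p b x) * (w x * w b) := by
            rw [← Finset.sum_add_distrib]
            exact Finset.sum_congr rfl fun x _ => by
              rw [← Finset.sum_add_distrib]
              exact Finset.sum_congr rfl fun b _ => by ring
    simp only [hKV, zero_mul, Finset.sum_const_zero] at h2
    linarith
  have key2 : ∑ x, ∑ b, pd b (fun p' => M p' x) p * (w x * w b)
      = ∑ x, ∑ b, (∑ s, Γ p s x b * M p s) * (w x * w b) := by
    have := key
    simp only [covD1, sub_mul, Finset.sum_sub_distrib] at this
    linarith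
  have tri1 : ∑ x, ∑ b, (∑ s, Γ p s x b * M p s) * (w x * w b)
      = ∑ s, ∑ x, ∑ b, Γ p s x b * M p s * (w x * w b) := by
    calc ∑ x, ∑ b, (∑ s, Γ p s x b * M p s) * (w x * w b)
        = ∑ x, ∑ b, ∑ s, Γ p s x b * M p s * (w x * w b) := by
          exact Finset.sum_congr rfl fun x _ => Finset.sum_congr rfl fun b _ => by
            rw [Finset.sum_mul]
      _ = ∑ x, ∑ s, ∑ b, Γ p s x b * M p s * (w x * w b) :=
          Finset.sum_congr rfl fun x _ => Finset.sum_comm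
      _ = ∑ s, ∑ x, ∑ b, Γ p s x b * M p s * (w x * w b) := Finset.sum_comm
  have tri2 : ∑ x, M p x * (∑ b, ∑ c, Γ p x b c * w b * w c)
      = ∑ x, ∑ b, ∑ c, Γ p x b c * M p x * (w b * w c) := by
    refine Finset.sum_congr rfl fun x _ => ?_
    rw [Finset.mul_sum]
    refine Finset.sum_congr rfl fun b _ => ?_
    rw [Finset.mul_sum]
    exact Finset.sum_congr rfl fun c _ => by ring
  calc ∑ x, ((∑ b, pd b (fun p' => M p' x) p * w b) * w x
        + M p x * (-(∑ b, ∑ c, Γ p x b c * w b * w c) - Qp x))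
      = (∑ x, ∑ b, pd b (fun p' => M p' x) p * (w x * w b))
        - (∑ x, M p x * (∑ b, ∑ c, Γ p x b c * w b * w c))
        - ∑ x, M p x * Qp x := by
        rw [← Finset.sum_sub_distrib, ← Finset.sum_sub_distrib]
        refine Finset.sum_congr rfl fun x _ => ?_
        rw [Finset.sum_mul]
        have : (∑ b, pd b (fun p' => M p' x) p * w b * w x)
            = ∑ b, pd b (fun p' => M p' x) p * (w x * w b) :=
          Finset.sum_congr rfl fun b _ => by ring
        rw [this]; ring
    _ = -(∑ x, M p x * Qp x) := by
        rw [key2, tri1, tri2]; ring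

lemma cancel_alg (m : ℕ) (t s₁ : ℝ) (S P : ℕ → ℝ) (hPm : P m = s₁) :
    (∑ i ∈ Finset.range (m+1), ((2*(i:ℝ)+1) * t^(2*i) * S i - t^(2*i+1) * P i))
    + s₁ * t^(2*m+1)
    + (∑ i ∈ Finset.range m, (-(2*(i:ℝ)+3) * S (i+1) * t^(2*i+2) + P i * t^(2*i+1)))
    + -(S 0) = 0 := by
  rw [Finset.sum_sub_distrib,
    Finset.sum_range_succ' (fun i => (2*(i:ℝ)+1) * t^(2*i) * S i) m,
    Finset.sum_range_succ (fun i => t^(2*i+1) * P i) m,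
    Finset.sum_add_distrib]
  have h1 : (∑ i ∈ Finset.range m, (2*((i:ℝ)+1)+1) * t^(2*(i+1)) * S (i+1))
      + (∑ i ∈ Finset.range m, -(2*(i:ℝ)+3) * S (i+1) * t^(2*i+2)) = 0 := by
    rw [← Finset.sum_add_distrib]
    refine Finset.sum_eq_zero fun i _ => by push_cast; ring
  have h2 : (∑ i ∈ Finset.range m, t^(2*i+1) * P i)
      = ∑ i ∈ Finset.range m, P i * t^(2*i+1) :=
    Finset.sum_congr rfl fun i _ => by ring
  have h3 : ∀ i ∈ Finset.range m, ((2*((i+1:ℕ)):ℝ)+1) * t^(2*(i+1)) * S (i+1)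
      = (2*((i:ℝ)+1)+1) * t^(2*(i+1)) * S (i+1) := fun i _ => by push_cast; ring
  rw [Finset.sum_congr rfl h3] at *
  push_cast
  rw [hPm] at *
  nlinarith [h1, h2]

lemma hasDerivAt_comp_smooth {D : ℕ} {f : Vec D → ℝ} (hf : ContDiff ℝ (⊤:ℕ∞) f)
    {q : ℝ → Vec D} {w : Vec D} {t : ℝ}
    (hq : ∀ x, HasDerivAt (fun τ => q τ x) (w x) t) :
    HasDerivAt (fun τ => f (q τ)) (∑ b, pd b f (q t) * w b) t := by
  have hq' : HasDerivAt q w t := hasDerivAt_pi.2 hq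
  have hd := ((hf.differentiable (by simp)) (q t)).hasFDerivAt
  have hcomp := hd.comp_hasDerivAt t hq'
  convert hcomp using 1
  · rfl
  · rfl
  · rfl
  have hw : w = ∑ b, w b • (Pi.single b 1 : Vec D) := by
    funext j
    simp [Finset.sum_apply, Pi.single_apply]
  rw [hw, map_sum]
  simp [pd, mul_comm]
  refine Finset.sum_congr rfl fun x _ => ?_
  simp [Pi.single_apply]

lemma const_of_hasDerivAt_zero {F : ℝ → ℝ} {a b : ℝ}
    (h : ∀ t ∈ Set.Ioo a b, HasDerivAt F 0 t)
    {t₁ t₂ : ℝ} (h1 : t₁ ∈ Set.Ioo a b) (h2 : t₂ ∈ Set.Ioo a b) : F t₁ = F t₂ := by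
  have hle := Convex.norm_image_sub_le_of_norm_hasDerivWithin_le
    (f' := fun _ => (0:ℝ)) (C := 0)
    (fun x hx => (h x hx).hasDerivWithinAt) (fun x _ => by simp) (convex_Ioo a b) h1 h2
  rw [zero_mul] at hle
  have := norm_le_zero_iff.mp hle
  linarith [sub_eq_zero.mp this]


/-- Proposition: LFI 1.1. `L j` represents the vector `L_{(j)a}`;
only the odd-indexed members `L (2N-1)`, `N = 1,…,ℓ`, occur. -/
theorem stmt5 {D : ℕ} (ℓ : ℕ) (hℓ : 1 ≤ ℓ)
    (Γ : Conn D) (Q : Vec D → Fin D → ℝ)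
    (hΓsym : ∀ q a b c, Γ q a b c = Γ q a c b)
    (hΓ : ∀ a b c, ContDiff ℝ (⊤ : ℕ∞) fun q => Γ q a b c)
    (hQ : ∀ a, ContDiff ℝ (⊤ : ℕ∞) fun q => Q q a)
    (L : ℕ → Vec D → Fin D → ℝ) (G : Vec D → ℝ) (s₁ : ℝ)
    (hLsm : ∀ N, 1 ≤ N → N ≤ ℓ → ∀ a, ContDiff ℝ (⊤ : ℕ∞) fun q => L (2 * N - 1) q a)
    (hG : ContDiff ℝ (⊤ : ℕ∞) G)
    -- the `L_{(2N−1)a}`, `N = 1,…,ℓ`, are generalized Killing vectors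
    (hKV : ∀ N, 1 ≤ N → N ≤ ℓ → IsGenKV Γ (L (2 * N - 1)))
    -- `(L_{(2k−1)b}Q^b)_{,a} = −2k(2k+1) L_{(2k+1)a}`, `k = 1,…,ℓ−1` (for `ℓ > 1`)
    (hc : ∀ k, 1 ≤ k → k + 1 ≤ ℓ → ∀ q (a : Fin D),
      pd a (fun p => ∑ b, L (2 * k - 1) p b * Q p b) q =
        -(2 * (k : ℝ) * (2 * (k : ℝ) + 1)) * L (2 * k + 1) q a)
    -- `L_{(1)a} = −G_{,a}` is a gradient generalized Killing vector
    (hG1 : ∀ q a, L 1 q a = -pd a G q)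
    -- `s₁ = L_{(2ℓ−1)a}Q^a` is a constant
    (hs₁ : ∀ q, ∑ a, L (2 * ℓ - 1) q a * Q q a = s₁) :
    FirstIntegral Γ Q (fun t q v =>
      (∑ N ∈ Finset.Icc 1 ℓ, t ^ (2 * N - 1) * ∑ a, L (2 * N - 1) q a * v a)
      + s₁ * t ^ (2 * ℓ) / ((2 * ℓ : ℕ) : ℝ)
      + (∑ N ∈ Finset.Icc 1 (ℓ - 1),
          (∑ a, L (2 * N - 1) q a * Q q a) * t ^ (2 * N) / ((2 * N : ℕ) : ℝ))
      + G q) := by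
  intro a b q v hsol t₁ ht₁ t₂ ht₂
  obtain ⟨m, rfl⟩ : ∃ m, ℓ = m + 1 := ⟨ℓ - 1, by omega⟩
  -- the function along the solution, reindexed over `range`
  set F : ℝ → ℝ := fun τ =>
    (∑ i ∈ Finset.range (m+1), τ^(2*i+1) * ∑ x, L (2*i+1) (q τ) x * v τ x)
    + s₁ * τ^(2*(m+1)) / ((2*(m+1):ℕ):ℝ)
    + (∑ i ∈ Finset.range m,
        (∑ x, L (2*i+1) (q τ) x * Q (q τ) x) * τ^(2*i+2) / ((2*i+2:ℕ):ℝ))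
    + G (q τ) with hF
  have hIe : ∀ τ : ℝ,
      (∑ N ∈ Finset.Icc 1 (m+1), τ ^ (2*N-1) * ∑ x, L (2*N-1) (q τ) x * v τ x)
      + s₁ * τ ^ (2*(m+1)) / ((2*(m+1):ℕ):ℝ)
      + (∑ N ∈ Finset.Icc 1 ((m+1)-1),
          (∑ x, L (2*N-1) (q τ) x * Q (q τ) x) * τ^(2*N) / ((2*N:ℕ):ℝ))
      + G (q τ) = F τ := by
    intro τ
    rw [hF]
    congr 2
    · congr 1
      rw [← Finset.Ico_add_one_right_eq_Icc, Finset.sum_Ico_eq_sum_range]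
      refine Finset.sum_congr (by congr 1) fun i _ => ?_
      have e1 : 2*(1+i)-1 = 2*i+1 := by omega
      rw [e1]
    · rw [← Finset.Ico_add_one_right_eq_Icc, Finset.sum_Ico_eq_sum_range]
      refine Finset.sum_congr (by congr 1) fun i _ => ?_
      have e1 : 2*(1+i)-1 = 2*i+1 := by omega
      have e2 : 2*(1+i) = 2*i+2 := by omega
      rw [e1, e2]
  have hder : ∀ t ∈ Set.Ioo a b, HasDerivAt F 0 t := by
    intro t ht
    have hq : ∀ x, HasDerivAt (fun τ => q τ x) (v t x) t := fun x => (hsol t ht x).1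
    have hv : ∀ x, HasDerivAt (fun τ => v τ x)
        (-(∑ b', ∑ c, Γ (q t) x b' c * v t b' * v t c) - Q (q t) x) t :=
      fun x => (hsol t ht x).2
    have hLsm' : ∀ i, i ≤ m → ∀ x, ContDiff ℝ (⊤:ℕ∞) fun p => L (2*i+1) p x := by
      intro i hi x
      have h := hLsm (i+1) (by omega) (by omega) x
      have e : 2*(i+1)-1 = 2*i+1 := by omega
      rwa [e] at h
    have hKV' : ∀ i, i ≤ m → IsGenKV Γ (L (2*i+1)) := by
      intro i hi
      have h := hKV (i+1) (by omega) (by omega)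
      have e : 2*(i+1)-1 = 2*i+1 := by omega
      rwa [e] at h
    have h1 : ∀ i ∈ Finset.range (m+1),
        HasDerivAt (fun τ => τ^(2*i+1) * ∑ x, L (2*i+1) (q τ) x * v τ x)
          ((2*(i:ℝ)+1) * t^(2*i) * (∑ x, L (2*i+1) (q t) x * v t x)
            - t^(2*i+1) * (∑ x, L (2*i+1) (q t) x * Q (q t) x)) t := by
      intro i hi
      have him : i ≤ m := by have := Finset.mem_range.mp hi; omega
      have hsum : HasDerivAt (fun τ => ∑ x, L (2*i+1) (q τ) x * v τ x)
          (∑ x, ((∑ b', pd b' (fun p => L (2*i+1) p x) (q t) * v t b') * v t x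
            + L (2*i+1) (q t) x
              * (-(∑ b', ∑ c, Γ (q t) x b' c * v t b' * v t c) - Q (q t) x))) t :=
        HasDerivAt.fun_sum fun x _ =>
          (hasDerivAt_comp_smooth (hLsm' i him x) hq).mul (hv x)
      have hkill := killing_alg Γ (L (2*i+1)) (q t) (v t) (Q (q t))
        (fun x b' => hKV' i him (q t) x b')
      rw [hkill] at hsum
      have hp := (hasDerivAt_pow (2*i+1) t).mul hsum
      convert hp using 1
      · rfl
      · rfl
      · rfl
      have e : 2*i+1-1 = 2*i := by omega
      rw [e]
      push_cast
      ring
    have h2 : HasDerivAt (fun τ => s₁ * τ^(2*(m+1)) / ((2*(m+1):ℕ):ℝ)) (s₁ * t^(2*m+1)) t := by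
      have hp := ((hasDerivAt_pow (2*(m+1)) t).const_mul s₁).div_const ((2*(m+1):ℕ):ℝ)
      convert hp using 1
      · rfl
      · rfl
      have e : 2*(m+1)-1 = 2*m+1 := by omega
      rw [e]
      have hne : ((2*(m+1):ℕ):ℝ) ≠ 0 := by positivity
      field_simp
    have h3 : ∀ i ∈ Finset.range m,
        HasDerivAt (fun τ =>
            (∑ x, L (2*i+1) (q τ) x * Q (q τ) x) * τ^(2*i+2) / ((2*i+2:ℕ):ℝ))
          (-(2*(i:ℝ)+3) * (∑ x, L (2*(i+1)+1) (q t) x * v t x) * t^(2*i+2)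
            + (∑ x, L (2*i+1) (q t) x * Q (q t) x) * t^(2*i+1)) t := by
      intro i hi
      have him : i < m := Finset.mem_range.mp hi
      have hfsm : ContDiff ℝ (⊤:ℕ∞) fun p => ∑ x, L (2*i+1) p x * Q p x :=
        ContDiff.sum fun x _ => (hLsm' i (by omega) x).mul (hQ x)
      have hPf := hasDerivAt_comp_smooth hfsm hq
      have hc' : ∀ b', pd b' (fun p => ∑ x, L (2*i+1) p x * Q p x) (q t)
          = -(2*((i:ℝ)+1) * (2*((i:ℝ)+1)+1)) * L (2*(i+1)+1) (q t) b' := by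
        intro b'
        have h := hc (i+1) (by omega) (by omega) (q t) b'
        have e : 2*(i+1)-1 = 2*i+1 := by omega
        rw [e] at h
        rw [h]
        push_cast
        ring
      simp only [hc'] at hPf
      have hS : (∑ b', -(2*((i:ℝ)+1) * (2*((i:ℝ)+1)+1)) * L (2*(i+1)+1) (q t) b' * v t b')
          = -(2*((i:ℝ)+1) * (2*((i:ℝ)+1)+1)) * ∑ x, L (2*(i+1)+1) (q t) x * v t x := by
        rw [Finset.mul_sum]
        exact Finset.sum_congr rfl fun x _ => by ring
      rw [hS] at hPf
      have hp := (hPf.mul (hasDerivAt_pow (2*i+2) t)).div_const ((2*i+2:ℕ):ℝ)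
      convert hp using 1
      · rfl
      · rfl
      · rfl
      have e : 2*i+2-1 = 2*i+1 := by omega
      rw [e]
      have hne : ((2*i+2:ℕ):ℝ) ≠ 0 := by positivity
      field_simp
      push_cast
      ring
    have h4 : HasDerivAt (fun τ => G (q τ)) (-(∑ x, L (2*0+1) (q t) x * v t x)) t := by
      have hp := hasDerivAt_comp_smooth hG hq
      convert hp using 1
      rw [← Finset.sum_neg_distrib]
      exact Finset.sum_congr rfl fun x _ => by
        rw [show (2*0+1) = 1 from rfl, hG1]; ring
    have htot := (((HasDerivAt.fun_sum h1).add h2).add (HasDerivAt.fun_sum h3)).add h4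
    have hPm : (∑ x, L (2*m+1) (q t) x * Q (q t) x) = s₁ := by
      have h := hs₁ (q t)
      have e : 2*(m+1)-1 = 2*m+1 := by omega
      rwa [e] at h
    have hE := cancel_alg m t s₁ (fun j => ∑ x, L (2*j+1) (q t) x * v t x)
      (fun j => ∑ x, L (2*j+1) (q t) x * Q (q t) x) hPm
    rw [hF]
    convert htot using 1
    · rfl
    · rfl
    · rfl
    linarith [hE]
  have h := const_of_hasDerivAt_zero hder ht₁ ht₂
  exact ((hIe t₁).trans h).trans (hIe t₂).symm
end
end

section
/- (Proposition: LFI 1.2.) Let ℓ ≥ 0. Suppose L_{(2N)a}(q), N = 0,1,…,ℓ, are smooth generalized Killing vectors of Γ satisfying (L_{(2k)b}Q^b)_{,a} = −2(2k+1)(k+1) L_{(2k+2)a} for k = 0,…,ℓ−1 (when ℓ > 0), and s₀ = L_{(2ℓ)a}Q^a is constant. Then I = Σ_{N=0}^{ℓ} t^{2N} L_{(2N)a} q̇^a + s₀ t^{2ℓ+1}/(2ℓ+1) + Σ_{N=0}^{ℓ−1} (L_{(2N)a}Q^a) t^{2N+1}/(2N+1) is a first integral of q̈^a = −Γ^a_{bc}q̇^bq̇^c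 − Q^a. -/
noncomputable section
open scoped BigOperators

lemma hasDerivAt_comp' {D : ℕ} (f : Vec D → ℝ) (hf : ContDiff ℝ (⊤ : ℕ∞) f)
    (q : ℝ → Vec D) (u : Vec D) (t : ℝ) (hq : HasDerivAt q u t) :
    HasDerivAt (fun τ => f (q τ)) (∑ b, u b * pd b f (q t)) t := by
  have hfd : HasFDerivAt f (fderiv ℝ f (q t)) (q t) :=
    (hf.differentiable (by simp) (q t)).hasFDerivAt
  have h := hfd.comp_hasDerivAt t hq
  have hu : u = ∑ b, u b • (Pi.single b 1 : Vec D) := by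
    funext j
    simp [Finset.sum_apply, Pi.single_apply, mul_ite]
  have heq : (fderiv ℝ f (q t)) u = ∑ b, u b * pd b f (q t) := by
    conv_lhs => rw [hu]
    rw [map_sum]
    refine Finset.sum_congr rfl fun b _ => ?_
    rw [map_smul]; simp [pd, smul_eq_mul]
  exact heq ▸ h

lemma killing_reduce {D : ℕ} (Γ : Conn D) (L : Vec D → Fin D → ℝ)
    (hΓsym : ∀ q a b c, Γ q a b c = Γ q a c b)
    (hKV : IsGenKV Γ L) (Q : Vec D → Fin D → ℝ) (p : Vec D) (u : Vec D) :
    ∑ a, ((∑ b, u b * pd b (fun x => L x a) p) * u a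
        + L p a * (-(∑ b, ∑ c, Γ p a b c * u b * u c) - Q p a))
      = -∑ a, L p a * Q p a := by
  have key : ∀ a b, pd b (fun x => L x a) p + pd a (fun x => L x b) p
      = 2 * ∑ s, Γ p s a b * L p s := by
    intro a b
    have h := hKV p a b
    simp only [covD1] at h
    have hsym : (∑ s, Γ p s b a * L p s) = ∑ s, Γ p s a b * L p s :=
      Finset.sum_congr rfl fun s _ => by rw [hΓsym p s b a]
    rw [hsym] at h
    linarith
  -- S := ∑ a ∑ b, pd b (L a) p * (u a * u b)
  have hS : (∑ a, ∑ b, pd b (fun x => L x a) p * (u a * u b))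
      = ∑ a, ∑ b, (∑ s, Γ p s a b * L p s) * (u a * u b) := by
    have h1 : (∑ a, ∑ b, pd b (fun x => L x a) p * (u a * u b))
        = ∑ a, ∑ b, pd a (fun x => L x b) p * (u a * u b) := by
      rw [Finset.sum_comm]
      exact Finset.sum_congr rfl fun a _ => Finset.sum_congr rfl fun b _ => by ring
    have h2 : (2:ℝ) * (∑ a, ∑ b, pd b (fun x => L x a) p * (u a * u b))
        = 2 * (∑ a, ∑ b, (∑ s, Γ p s a b * L p s) * (u a * u b)) := by
      calc (2:ℝ) * (∑ a, ∑ b, pd b (fun x => L x a) p * (u a * u b))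
          = (∑ a, ∑ b, pd b (fun x => L x a) p * (u a * u b))
            + (∑ a, ∑ b, pd a (fun x => L x b) p * (u a * u b)) := by rw [← h1]; ring
        _ = ∑ a, ∑ b, (pd b (fun x => L x a) p + pd a (fun x => L x b) p) * (u a * u b) := by
            rw [← Finset.sum_add_distrib]
            exact Finset.sum_congr rfl fun a _ => by rw [← Finset.sum_add_distrib]; exact Finset.sum_congr rfl fun b _ => by ring
        _ = _ := by
            rw [Finset.mul_sum]
            refine Finset.sum_congr rfl fun a _ => ?_
            rw [Finset.mul_sum]
            exact Finset.sum_congr rfl fun b _ => by rw [key a b]; ring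
    exact mul_left_cancel₀ two_ne_zero h2
  have hGam : (∑ a, L p a * (∑ b, ∑ c, Γ p a b c * u b * u c))
      = ∑ a, ∑ b, (∑ s, Γ p s a b * L p s) * (u a * u b) := by
    calc (∑ a, L p a * (∑ b, ∑ c, Γ p a b c * u b * u c))
        = ∑ s, ∑ a, ∑ b, Γ p s a b * L p s * (u a * u b) := by
          refine Finset.sum_congr rfl fun s _ => ?_
          rw [Finset.mul_sum]
          refine Finset.sum_congr rfl fun a _ => ?_
          rw [Finset.mul_sum]
          exact Finset.sum_congr rfl fun b _ => by ring
      _ = ∑ a, ∑ b, ∑ s, Γ p s a b * L p s * (u a * u b) := by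
          rw [Finset.sum_comm]
          exact Finset.sum_congr rfl fun a _ => Finset.sum_comm
      _ = _ := by
          refine Finset.sum_congr rfl fun a _ => Finset.sum_congr rfl fun b _ => ?_
          rw [Finset.sum_mul]
  calc ∑ a, ((∑ b, u b * pd b (fun x => L x a) p) * u a
        + L p a * (-(∑ b, ∑ c, Γ p a b c * u b * u c) - Q p a))
      = (∑ a, ∑ b, pd b (fun x => L x a) p * (u a * u b))
        - (∑ a, L p a * (∑ b, ∑ c, Γ p a b c * u b * u c))
        - ∑ a, L p a * Q p a := by
        rw [← Finset.sum_sub_distrib, ← Finset.sum_sub_distrib]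
        refine Finset.sum_congr rfl fun a _ => ?_
        have hmul : (∑ b, u b * pd b (fun x => L x a) p) * u a
            = ∑ b, pd b (fun x => L x a) p * (u a * u b) := by
          rw [Finset.sum_mul]
          exact Finset.sum_congr rfl fun b _ => by ring
        rw [hmul]
        ring
      _ = -∑ a, L p a * Q p a := by rw [hS, hGam]; ring

/-- Proposition: LFI 1.2. `L j` represents the vector `L_{(j)a}`;
only the even-indexed members `L (2N)`, `N = 0,…,ℓ`, occur. -/
theorem stmt6 {D : ℕ} (ℓ : ℕ)
    (Γ : Conn D) (Q : Vec D → Fin D → ℝ)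
    (hΓsym : ∀ q a b c, Γ q a b c = Γ q a c b)
    (hΓ : ∀ a b c, ContDiff ℝ (⊤ : ℕ∞) fun q => Γ q a b c)
    (hQ : ∀ a, ContDiff ℝ (⊤ : ℕ∞) fun q => Q q a)
    (L : ℕ → Vec D → Fin D → ℝ) (s₀ : ℝ)
    (hLsm : ∀ N, N ≤ ℓ → ∀ a, ContDiff ℝ (⊤ : ℕ∞) fun q => L (2 * N) q a)
    -- the `L_{(2N)a}`, `N = 0,…,ℓ`, are generalized Killing vectors
    (hKV : ∀ N, N ≤ ℓ → IsGenKV Γ (L (2 * N)))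
    -- `(L_{(2k)b}Q^b)_{,a} = −2(2k+1)(k+1) L_{(2k+2)a}`, `k = 0,…,ℓ−1` (for `ℓ > 0`)
    (hc : ∀ k, k + 1 ≤ ℓ → ∀ q (a : Fin D),
      pd a (fun p => ∑ b, L (2 * k) p b * Q p b) q =
        -(2 * (2 * (k : ℝ) + 1) * ((k : ℝ) + 1)) * L (2 * k + 2) q a)
    -- `L_{(2ℓ)a}Q^a = s₀` is a constant
    (hs₀ : ∀ q, ∑ a, L (2 * ℓ) q a * Q q a = s₀) :
    FirstIntegral Γ Q (fun t q v =>
      (∑ N ∈ Finset.range (ℓ + 1), t ^ (2 * N) * ∑ a, L (2 * N) q a * v a)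
      + s₀ * t ^ (2 * ℓ + 1) / ((2 * ℓ + 1 : ℕ) : ℝ)
      + (∑ N ∈ Finset.range ℓ,
          (∑ a, L (2 * N) q a * Q q a) * t ^ (2 * N + 1) / ((2 * N + 1 : ℕ) : ℝ))) := by
  intro a b q v hsol t₁ ht₁ t₂ ht₂
  set F : ℝ → ℝ := fun t =>
      (∑ N ∈ Finset.range (ℓ + 1), t ^ (2 * N) * ∑ i, L (2 * N) (q t) i * v t i)
      + s₀ * t ^ (2 * ℓ + 1) / ((2 * ℓ + 1 : ℕ) : ℝ)
      + (∑ N ∈ Finset.range ℓ,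
          (∑ i, L (2 * N) (q t) i * Q (q t) i) * t ^ (2 * N + 1) / ((2 * N + 1 : ℕ) : ℝ))
    with hFdef
  show F t₁ = F t₂
  have key : ∀ t ∈ Set.Ioo a b, HasDerivAt F 0 t := by
    intro t ht
    have hq : HasDerivAt q (v t) t := hasDerivAt_pi.2 fun i => (hsol t ht i).1
    -- derivative of the "kinetic" coefficients
    have hg : ∀ N, N ≤ ℓ → HasDerivAt (fun τ => ∑ i, L (2*N) (q τ) i * v τ i)
        (-(∑ i, L (2*N) (q t) i * Q (q t) i)) t := by
      intro N hN
      have h : HasDerivAt (fun τ => ∑ i, L (2*N) (q τ) i * v τ i)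
          (∑ i, ((∑ j, v t j * pd j (fun x => L (2*N) x i) (q t)) * v t i
            + L (2*N) (q t) i * (-(∑ j, ∑ c, Γ (q t) i j c * v t j * v t c) - Q (q t) i))) t :=
        HasDerivAt.fun_sum fun i _ =>
          (hasDerivAt_comp' _ (hLsm N hN i) q (v t) t hq).mul (hsol t ht i).2
      rwa [killing_reduce Γ (L (2*N)) hΓsym (hKV N hN) Q (q t) (v t)] at h
    -- derivative of the potential coefficients
    have hh : ∀ N, N + 1 ≤ ℓ → HasDerivAt (fun τ => ∑ i, L (2*N) (q τ) i * Q (q τ) i)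
        (-(2*(2*(N:ℝ)+1)*((N:ℝ)+1)) * ∑ i, L (2*(N+1)) (q t) i * v t i) t := by
      intro N hN
      have hsmooth : ContDiff ℝ (⊤:ℕ∞) (fun x : Vec D => ∑ i, L (2*N) x i * Q x i) :=
        ContDiff.sum fun i _ => (hLsm N (by omega) i).mul (hQ i)
      have h := hasDerivAt_comp' _ hsmooth q (v t) t hq
      have heq : (∑ j, v t j * pd j (fun x : Vec D => ∑ i, L (2*N) x i * Q x i) (q t))
          = -(2*(2*(N:ℝ)+1)*((N:ℝ)+1)) * ∑ i, L (2*(N+1)) (q t) i * v t i := by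
        rw [Finset.mul_sum]
        refine Finset.sum_congr rfl fun j _ => ?_
        rw [hc N hN (q t) j]
        have h22 : 2*N+2 = 2*(N+1) := by ring
        rw [h22]; ring
      exact heq ▸ h
    have hA : HasDerivAt
        (fun τ => ∑ N ∈ Finset.range (ℓ+1), τ^(2*N) * ∑ i, L (2*N) (q τ) i * v τ i)
        (∑ N ∈ Finset.range (ℓ+1), (((2*N:ℕ):ℝ) * t^(2*N-1) * (∑ i, L (2*N) (q t) i * v t i)
          + t^(2*N) * (-(∑ i, L (2*N) (q t) i * Q (q t) i)))) t :=
      HasDerivAt.fun_sum fun N hN =>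
        (hasDerivAt_pow (2*N) t).mul (hg N (Nat.lt_succ_iff.mp (Finset.mem_range.mp hN)))
    have hB : HasDerivAt (fun τ => s₀ * τ^(2*ℓ+1) / ((2*ℓ+1:ℕ):ℝ))
        (s₀ * (((2*ℓ+1:ℕ):ℝ) * t^(2*ℓ+1-1)) / ((2*ℓ+1:ℕ):ℝ)) t :=
      ((hasDerivAt_pow (2*ℓ+1) t).const_mul s₀).div_const _
    have hC : HasDerivAt
        (fun τ => ∑ N ∈ Finset.range ℓ,
          (∑ i, L (2*N) (q τ) i * Q (q τ) i) * τ^(2*N+1) / ((2*N+1:ℕ):ℝ))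
        (∑ N ∈ Finset.range ℓ,
          ((-(2*(2*(N:ℝ)+1)*((N:ℝ)+1)) * ∑ i, L (2*(N+1)) (q t) i * v t i) * t^(2*N+1)
            + (∑ i, L (2*N) (q t) i * Q (q t) i) * (((2*N+1:ℕ):ℝ) * t^(2*N+1-1)))
            / ((2*N+1:ℕ):ℝ)) t :=
      HasDerivAt.fun_sum fun N hN =>
        ((hh N (Finset.mem_range.mp hN)).mul (hasDerivAt_pow (2*N+1) t)).div_const _
    have hsum : HasDerivAt F
        ((∑ N ∈ Finset.range (ℓ+1), (((2*N:ℕ):ℝ) * t^(2*N-1) * (∑ i, L (2*N) (q t) i * v t i)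
          + t^(2*N) * (-(∑ i, L (2*N) (q t) i * Q (q t) i))))
         + s₀ * (((2*ℓ+1:ℕ):ℝ) * t^(2*ℓ+1-1)) / ((2*ℓ+1:ℕ):ℝ)
         + (∑ N ∈ Finset.range ℓ,
          ((-(2*(2*(N:ℝ)+1)*((N:ℝ)+1)) * ∑ i, L (2*(N+1)) (q t) i * v t i) * t^(2*N+1)
            + (∑ i, L (2*N) (q t) i * Q (q t) i) * (((2*N+1:ℕ):ℝ) * t^(2*N+1-1)))
            / ((2*N+1:ℕ):ℝ))) t := (hA.add hB).add hC
    have cast1 : ∀ n:ℕ, ((2*n+1:ℕ):ℝ) ≠ 0 := fun n => by push_cast; positivity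
    have hE : ((∑ N ∈ Finset.range (ℓ+1), (((2*N:ℕ):ℝ) * t^(2*N-1) * (∑ i, L (2*N) (q t) i * v t i)
          + t^(2*N) * (-(∑ i, L (2*N) (q t) i * Q (q t) i))))
         + s₀ * (((2*ℓ+1:ℕ):ℝ) * t^(2*ℓ+1-1)) / ((2*ℓ+1:ℕ):ℝ)
         + (∑ N ∈ Finset.range ℓ,
          ((-(2*(2*(N:ℝ)+1)*((N:ℝ)+1)) * ∑ i, L (2*(N+1)) (q t) i * v t i) * t^(2*N+1)
            + (∑ i, L (2*N) (q t) i * Q (q t) i) * (((2*N+1:ℕ):ℝ) * t^(2*N+1-1)))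
            / ((2*N+1:ℕ):ℝ))) = 0 := by
      rw [Finset.sum_add_distrib]
      have hS1 : (∑ N ∈ Finset.range (ℓ+1),
            ((2*N:ℕ):ℝ) * t^(2*N-1) * (∑ i, L (2*N) (q t) i * v t i))
          = ∑ N ∈ Finset.range ℓ,
            (2*((N:ℝ)+1)) * t^(2*N+1) * (∑ i, L (2*(N+1)) (q t) i * v t i) := by
        rw [Finset.sum_range_succ']
        have h0 : ((2*0:ℕ):ℝ) * t^(2*0-1) * (∑ i, L (2*0) (q t) i * v t i) = 0 := by norm_num
        rw [h0, add_zero]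
        refine Finset.sum_congr rfl fun N _ => ?_
        have h1 : 2*(N+1)-1 = 2*N+1 := by omega
        rw [h1]; push_cast; ring
      have hS2 : (∑ N ∈ Finset.range (ℓ+1),
            t^(2*N) * (-(∑ i, L (2*N) (q t) i * Q (q t) i)))
          = (∑ N ∈ Finset.range ℓ, t^(2*N) * (-(∑ i, L (2*N) (q t) i * Q (q t) i)))
            + t^(2*ℓ) * (-s₀) := by
        rw [Finset.sum_range_succ, hs₀ (q t)]
      have hEB : s₀ * (((2*ℓ+1:ℕ):ℝ) * t^(2*ℓ+1-1)) / ((2*ℓ+1:ℕ):ℝ) = s₀ * t^(2*ℓ) := by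
        have h1 : 2*ℓ+1-1 = 2*ℓ := rfl
        rw [h1]
        field_simp
      have hEC : (∑ N ∈ Finset.range ℓ,
            ((-(2*(2*(N:ℝ)+1)*((N:ℝ)+1)) * ∑ i, L (2*(N+1)) (q t) i * v t i) * t^(2*N+1)
              + (∑ i, L (2*N) (q t) i * Q (q t) i) * (((2*N+1:ℕ):ℝ) * t^(2*N+1-1)))
              / ((2*N+1:ℕ):ℝ))
          = ∑ N ∈ Finset.range ℓ,
            (-(2*((N:ℝ)+1)) * (∑ i, L (2*(N+1)) (q t) i * v t i) * t^(2*N+1)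
              + (∑ i, L (2*N) (q t) i * Q (q t) i) * t^(2*N)) := by
        refine Finset.sum_congr rfl fun N _ => ?_
        have h1 : 2*N+1-1 = 2*N := rfl
        rw [h1, div_eq_iff (cast1 N)]
        push_cast; ring
      rw [hS1, hS2, hEB, hEC]
      have hcomb : (∑ N ∈ Finset.range ℓ,
            (2*((N:ℝ)+1)) * t^(2*N+1) * (∑ i, L (2*(N+1)) (q t) i * v t i))
          + (∑ N ∈ Finset.range ℓ, t^(2*N) * (-(∑ i, L (2*N) (q t) i * Q (q t) i)))
          + (∑ N ∈ Finset.range ℓ,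
            (-(2*((N:ℝ)+1)) * (∑ i, L (2*(N+1)) (q t) i * v t i) * t^(2*N+1)
              + (∑ i, L (2*N) (q t) i * Q (q t) i) * t^(2*N))) = 0 := by
        rw [← Finset.sum_add_distrib, ← Finset.sum_add_distrib]
        exact Finset.sum_eq_zero fun N _ => by ring
      linear_combination hcomb
    exact hE ▸ hsum
  have const : ∀ s₁ ∈ Set.Ioo a b, ∀ s₂ ∈ Set.Ioo a b, s₁ ≤ s₂ → F s₂ = F s₁ := by
    intro s₁ h₁ s₂ h₂ hle
    have hsub : Set.Icc s₁ s₂ ⊆ Set.Ioo a b := Set.Icc_subset_Ioo h₁.1 h₂.2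
    exact constant_of_has_deriv_right_zero
      (fun x hx => (key x (hsub hx)).continuousAt.continuousWithinAt)
      (fun x hx => (key x (hsub (Set.Ico_subset_Icc_self hx))).hasDerivWithinAt)
      s₂ (Set.right_mem_Icc.2 hle)
  rcases le_total t₁ t₂ with h | h
  · exact (const t₁ ht₁ t₂ ht₂ h).symm
  · exact const t₂ ht₂ t₁ ht₁ h
end
end

section
/- (Proposition on Riemannian connections, case 2.) Let I₁, I₂ ⊆ ℝ be open intervals, f : I₁ → ℝ smooth with f(x) > 0, and h : I₂ → ℝ smooth with h(y) ≠ 0. Consider the symmetric connection on U = I₁ × I₂ whose only nonzero coefficients are Γ¹₁₁ = f'(x)/(2f(x)) and Γ²₂₂ = h'(y)/h(y). Then the symmetric matrix field γ_{ab} = [[f(x), h(y)√f(x)],[h(y)√f(x), 0]] is covariantly constant with respect to this connection and satisfies det[γ_{ab}] = −h(y)² f(x) ≠ 0 on U; hence the connection is Riemannian with kinetic metric γ_{ab}. -/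
noncomputable section
open scoped BigOperators

/-- Partial derivative `∂f/∂x` on `ℝ²`. -/
def pdx (f : ℝ × ℝ → ℝ) (z : ℝ × ℝ) : ℝ := fderiv ℝ f z (1, 0)

/-- Partial derivative `∂f/∂y` on `ℝ²`. -/
def pdy (f : ℝ × ℝ → ℝ) (z : ℝ × ℝ) : ℝ := fderiv ℝ f z (0, 1)

/-- Partial derivative `∂f/∂q^c` on `ℝ²`, `c : Fin 2`. -/
def pd2 (c : Fin 2) (f : ℝ × ℝ → ℝ) (z : ℝ × ℝ) : ℝ :=
  if c = 0 then pdx f z else pdy f z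

/-- The symmetric connection on `ℝ²` whose only (possibly) nonzero
coefficients are `Γ¹₁₁ = G1` and `Γ²₂₂ = G2`. -/
def conn2 (G1 G2 : ℝ × ℝ → ℝ) (z : ℝ × ℝ) (a b c : Fin 2) : ℝ :=
  if a = 0 ∧ b = 0 ∧ c = 0 then G1 z
  else if a = 1 ∧ b = 1 ∧ c = 1 then G2 z else 0

/-- `γ_{ab}` is covariantly constant on `U` with respect to `conn2 G1 G2`:
`γ_{ab,c} − γ_{db}Γ^d_{ac} − γ_{ad}Γ^d_{bc} = 0`. -/
def CovConstOn (G1 G2 : ℝ × ℝ → ℝ) (γ : ℝ × ℝ → Fin 2 → Fin 2 → ℝ)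
    (U : Set (ℝ × ℝ)) : Prop :=
  ∀ z ∈ U, ∀ a b c : Fin 2,
    pd2 c (fun w => γ w a b) z
      - (∑ d, γ z d b * conn2 G1 G2 z d a c)
      - (∑ d, γ z a d * conn2 G1 G2 z d b c) = 0

/-- `γ_{ab}` is a kinetic metric on `U` for the connection `conn2 G1 G2`:
a smooth symmetric covariantly constant matrix field with nonzero determinant.
The connection is *Riemannian* on `U` iff such a `γ` exists. -/
def IsKineticMetricOn (G1 G2 : ℝ × ℝ → ℝ) (γ : ℝ × ℝ → Fin 2 → Fin 2 → ℝ)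
    (U : Set (ℝ × ℝ)) : Prop :=
  (∀ a b, ContDiffOn ℝ (⊤ : ℕ∞) (fun z => γ z a b) U) ∧
  (∀ z a b, γ z a b = γ z b a) ∧
  CovConstOn G1 G2 γ U ∧
  ∀ z ∈ U, γ z 0 0 * γ z 1 1 - γ z 0 1 * γ z 1 0 ≠ 0

lemma pd_mul' (g k : ℝ → ℝ) (g' k' : ℝ) (z : ℝ × ℝ)
    (hg : HasDerivAt g g' z.1) (hk : HasDerivAt k k' z.2) :
    pdx (fun w => g w.1 * k w.2) z = g' * k z.2 ∧
    pdy (fun w => g w.1 * k w.2) z = g z.1 * k' := by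
  have Hg : HasFDerivAt (fun w : ℝ × ℝ => g w.1) (g' • ContinuousLinearMap.fst ℝ ℝ ℝ) z :=
    hg.comp_hasFDerivAt z hasFDerivAt_fst
  have Hk : HasFDerivAt (fun w : ℝ × ℝ => k w.2) (k' • ContinuousLinearMap.snd ℝ ℝ ℝ) z :=
    hk.comp_hasFDerivAt z hasFDerivAt_snd
  have H : HasFDerivAt (fun w : ℝ × ℝ => g w.1 * k w.2) _ z := Hg.mul Hk
  constructor <;> simp [pdx, pdy, H.fderiv, ContinuousLinearMap.smul_apply] <;> ring

lemma pd_fst' (g : ℝ → ℝ) (g' : ℝ) (z : ℝ × ℝ) (hg : HasDerivAt g g' z.1) :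
    pdx (fun w => g w.1) z = g' ∧ pdy (fun w => g w.1) z = 0 := by
  have Hg : HasFDerivAt (fun w : ℝ × ℝ => g w.1) (g' • ContinuousLinearMap.fst ℝ ℝ ℝ) z :=
    hg.comp_hasFDerivAt z hasFDerivAt_fst
  constructor <;> simp [pdx, pdy, Hg.fderiv, ContinuousLinearMap.smul_apply]

/-- Proposition on Riemannian connections, case 2. For
`Γ¹₁₁ = f'/(2f)`, `Γ²₂₂ = h'/h` on `U = I₁ × I₂`, the matrix field
`γ = [[f, h√f],[h√f, 0]]` is covariantly constant with `det γ = −h²f ≠ 0`;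
hence the connection is Riemannian with kinetic metric `γ`. -/
theorem stmt12 (I₁ I₂ : Set ℝ)
    (hI₁ : IsOpen I₁) (hI₁' : I₁.OrdConnected)
    (hI₂ : IsOpen I₂) (hI₂' : I₂.OrdConnected)
    (f h : ℝ → ℝ)
    (hf : ContDiffOn ℝ (⊤ : ℕ∞) f I₁) (hf0 : ∀ x ∈ I₁, 0 < f x)
    (hh : ContDiffOn ℝ (⊤ : ℕ∞) h I₂) (hh0 : ∀ y ∈ I₂, h y ≠ 0) :
    CovConstOn (fun z => deriv f z.1 / (2 * f z.1)) (fun z => deriv h z.2 / h z.2)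
      (fun z a b =>
        if a = 0 ∧ b = 0 then f z.1
        else if a = 1 ∧ b = 1 then 0
        else h z.2 * Real.sqrt (f z.1)) (I₁ ×ˢ I₂) ∧
    (∀ z ∈ I₁ ×ˢ I₂,
      f z.1 * 0 - (h z.2 * Real.sqrt (f z.1)) * (h z.2 * Real.sqrt (f z.1)) =
        -((h z.2) ^ 2 * f z.1) ∧
      -((h z.2) ^ 2 * f z.1) ≠ 0) ∧
    IsKineticMetricOn (fun z => deriv f z.1 / (2 * f z.1)) (fun z => deriv h z.2 / h z.2)
      (fun z a b =>
        if a = 0 ∧ b = 0 then f z.1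
        else if a = 1 ∧ b = 1 then 0
        else h z.2 * Real.sqrt (f z.1)) (I₁ ×ˢ I₂) := by
  
  set γ : ℝ × ℝ → Fin 2 → Fin 2 → ℝ := fun z a b =>
    if a = 0 ∧ b = 0 then f z.1
    else if a = 1 ∧ b = 1 then 0
    else h z.2 * Real.sqrt (f z.1) with hγ
  -- basic derivative facts at points of U
  have hfd : ∀ x ∈ I₁, HasDerivAt f (deriv f x) x := fun x hx =>
    ((hf.contDiffAt (hI₁.mem_nhds hx)).differentiableAt (by simp)).hasDerivAt
  have hhd : ∀ y ∈ I₂, HasDerivAt h (deriv h y) y := fun y hy =>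
    ((hh.contDiffAt (hI₂.mem_nhds hy)).differentiableAt (by simp)).hasDerivAt
  have hsq : ∀ x ∈ I₁, HasDerivAt (fun x => Real.sqrt (f x))
      (deriv f x / (2 * Real.sqrt (f x))) x := by
    intro x hx
    have := (Real.hasDerivAt_sqrt (ne_of_gt (hf0 x hx))).comp x (hfd x hx)
    exact this.congr_deriv (by ring)
  have sqpos : ∀ x ∈ I₁, 0 < Real.sqrt (f x) := fun x hx => Real.sqrt_pos.2 (hf0 x hx)
  have sqsq : ∀ x ∈ I₁, Real.sqrt (f x) * Real.sqrt (f x) = f x := fun x hx =>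
    Real.mul_self_sqrt (le_of_lt (hf0 x hx))
  have hcov : CovConstOn (fun z => deriv f z.1 / (2 * f z.1))
      (fun z => deriv h z.2 / h z.2) γ (I₁ ×ˢ I₂) := by
    intro z hz a b c
    obtain ⟨hz1, hz2⟩ := hz
    have hfz := hf0 z.1 hz1
    have hhz := hh0 z.2 hz2
    have hsqz := sqpos z.1 hz1
    have hsq2 := sqsq z.1 hz1
    have P1 := pd_fst' f (deriv f z.1) z (hfd z.1 hz1)
    have P2 := pd_mul' (fun x => Real.sqrt (f x)) h
      (deriv f z.1 / (2 * Real.sqrt (f z.1))) (deriv h z.2) z (hsq z.1 hz1) (hhd z.2 hz2)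
    have P3 : pdx (fun _ : ℝ × ℝ => (0 : ℝ)) z = 0 ∧ pdy (fun _ : ℝ × ℝ => (0 : ℝ)) z = 0 := by
      constructor <;> simp [pdx, pdy]
    have hmc : ∀ w : ℝ × ℝ, h w.2 * Real.sqrt (f w.1) = Real.sqrt (f w.1) * h w.2 :=
      fun w => mul_comm _ _
    have hfne : f z.1 ≠ 0 := ne_of_gt hfz
    have hsne : Real.sqrt (f z.1) ≠ 0 := ne_of_gt hsqz
    fin_cases a <;> fin_cases b <;> fin_cases c <;>
      simp only [hγ, pd2, conn2, CovConstOn, Fin.sum_univ_two, Fin.isValue] <;>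
      norm_num <;>
      simp only [hmc, P1.1, P1.2, P2.1, P2.2, P3.1, P3.2] <;>
      (try beta_reduce) <;>
      field_simp <;>
      (try ring_nf) <;>
      (try simp only [Real.sq_sqrt hfz.le, hsq2]) <;> (try ring) <;> nlinarith [hsq2]
  have hdet : ∀ z ∈ I₁ ×ˢ I₂,
      f z.1 * 0 - (h z.2 * Real.sqrt (f z.1)) * (h z.2 * Real.sqrt (f z.1)) =
        -((h z.2) ^ 2 * f z.1) ∧ -((h z.2) ^ 2 * f z.1) ≠ 0 := by
    intro z hz
    have h1 := sqsq z.1 hz.1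
    have h2 := hf0 z.1 hz.1
    have h3 := hh0 z.2 hz.2
    constructor
    · nlinarith [h1]
    · intro hc
      apply h3
      have : (h z.2) ^ 2 * f z.1 = 0 := by linarith
      have := (mul_eq_zero.1 this).resolve_right (ne_of_gt h2)
      exact pow_eq_zero_iff (n := 2) (by norm_num) |>.1 this
  refine ⟨hcov, hdet, ?_, ?_, hcov, ?_⟩
  · -- smoothness
    intro a b
    have hsmooth : ContDiffOn ℝ (⊤ : ℕ∞) (fun z : ℝ × ℝ => h z.2 * Real.sqrt (f z.1))
        (I₁ ×ˢ I₂) := by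
      intro z hz
      have hU : IsOpen (I₁ ×ˢ I₂) := hI₁.prod hI₂
      have c1 : ContDiffAt ℝ (⊤ : ℕ∞) (fun z : ℝ × ℝ => h z.2) z :=
        (hh.contDiffAt (hI₂.mem_nhds hz.2)).comp z contDiffAt_snd
      have c2 : ContDiffAt ℝ (⊤ : ℕ∞) (fun z : ℝ × ℝ => Real.sqrt (f z.1)) z := by
        have cf : ContDiffAt ℝ (⊤ : ℕ∞) (fun z : ℝ × ℝ => f z.1) z :=
          (hf.contDiffAt (hI₁.mem_nhds hz.1)).comp z contDiffAt_fst
        exact (Real.contDiffAt_sqrt (ne_of_gt (hf0 z.1 hz.1))).comp z cf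
      exact (c1.mul c2).contDiffWithinAt
    have hfsmooth : ContDiffOn ℝ (⊤ : ℕ∞) (fun z : ℝ × ℝ => f z.1) (I₁ ×ˢ I₂) :=
      hf.comp contDiffOn_fst (fun z hz => hz.1)
    fin_cases a <;> fin_cases b <;> simp only [hγ] <;> norm_num
    · exact hfsmooth
    · exact hsmooth
    · exact hsmooth
    · exact contDiffOn_const
  · intro z a b
    fin_cases a <;> fin_cases b <;> simp [hγ]
  · intro z hz
    have h1 := sqsq z.1 hz.1
    have h2 := hf0 z.1 hz.1
    have h3 := hh0 z.2 hz.2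
    simp only [hγ]
    norm_num
    exact ⟨h3, ne_of_gt (Real.sqrt_pos.2 h2)⟩
end
end

section
/- (Proposition: criterion for a non-Riemannian connection.) Let U ⊆ ℝ² be open and let Γ¹₁₁(x,y) and Γ²₂₂(x,y) be smooth; consider the symmetric connection on U whose only possibly nonzero coefficients are Γ¹₁₁ and Γ²₂₂. If there exists a smooth symmetric matrix field γ_{ab} on U that is covariantly constant with respect to this connection and satisfies det[γ_{ab}] ≠ 0 everywhere on U, then ∂Γ¹₁₁/∂y = ∂Γ²₂₂/∂x at every point of U. Equivalently, if ∂Γ¹₁₁/∂y ≠ ∂Γ²₂₂/∂x at some point of U, the connection admits no kinetic metric, i.e. the dynamical system ẍ = −Q¹(x,y) − Γ¹₁₁ ẋ², ÿ = −Q²(x,y) − Γ²₂₂ ẏ² is non-Riemannian. -/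
noncomputable section
open scoped BigOperators

lemma pdx_mul {g h : ℝ × ℝ → ℝ} {z : ℝ × ℝ} (hg : DifferentiableAt ℝ g z)
    (hh : DifferentiableAt ℝ h z) :
    pdx (fun w => g w * h w) z = g z * pdx h z + pdx g z * h z := by
  unfold pdx
  rw [fderiv_fun_mul hg hh]
  simp [mul_comm]

lemma pdy_mul {g h : ℝ × ℝ → ℝ} {z : ℝ × ℝ} (hg : DifferentiableAt ℝ g z)
    (hh : DifferentiableAt ℝ h z) :
    pdy (fun w => g w * h w) z = g z * pdy h z + pdy g z * h z := by
  unfold pdy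
  rw [fderiv_fun_mul hg hh]
  simp [mul_comm]

lemma mixed_symm {f : ℝ × ℝ → ℝ} {z : ℝ × ℝ} (hf : ContDiffAt ℝ 2 f z) :
    pdy (pdx f) z = pdx (pdy f) z := by
  have hd : DifferentiableAt ℝ (fderiv ℝ f) z :=
    (hf.fderiv_right (m := 1) (by norm_num)).differentiableAt (by norm_num)
  have hsym := hf.isSymmSndFDerivAt (by norm_num)
  have e1 : pdy (pdx f) z = fderiv ℝ (fderiv ℝ f) z (0,1) (1,0) := by
    unfold pdy pdx
    rw [fderiv_clm_apply hd (differentiableAt_const _)]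
    simp
  have e2 : pdx (pdy f) z = fderiv ℝ (fderiv ℝ f) z (1,0) (0,1) := by
    unfold pdy pdx
    rw [fderiv_clm_apply hd (differentiableAt_const _)]
    simp
  rw [e1, e2]
  exact hsym _ _


/-- criterion for a non-Riemannian connection. If the
connection with only nonzero coefficients `Γ¹₁₁ = G1`, `Γ²₂₂ = G2` admits a
kinetic metric (a smooth symmetric covariantly constant matrix field with
nonvanishing determinant) on the open set `U`, then
`∂Γ¹₁₁/∂y = ∂Γ²₂₂/∂x` on `U`. -/
theorem stmt14 (U : Set (ℝ × ℝ)) (hU : IsOpen U) (G1 G2 : ℝ × ℝ → ℝ)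
    (hG1 : ContDiffOn ℝ (⊤ : ℕ∞) G1 U) (hG2 : ContDiffOn ℝ (⊤ : ℕ∞) G2 U)
    (γ : ℝ × ℝ → Fin 2 → Fin 2 → ℝ)
    (hγ : IsKineticMetricOn G1 G2 γ U) :
    ∀ z ∈ U, pdy G1 z = pdx G2 z := by
  obtain ⟨hsm, hsymm, hcov, hdet⟩ := hγ
  -- differentiability facts
  have dγ : ∀ (a b : Fin 2), ∀ w ∈ U, DifferentiableAt ℝ (fun u => γ u a b) w := by
    intro a b w hw
    exact ((hsm a b).contDiffAt (hU.mem_nhds hw)).differentiableAt (by norm_num)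
  have dG1 : ∀ w ∈ U, DifferentiableAt ℝ G1 w := fun w hw =>
    (hG1.contDiffAt (hU.mem_nhds hw)).differentiableAt (by norm_num)
  have dG2 : ∀ w ∈ U, DifferentiableAt ℝ G2 w := fun w hw =>
    (hG2.contDiffAt (hU.mem_nhds hw)).differentiableAt (by norm_num)
  -- component equations of covariant constancy
  have E00x : ∀ w ∈ U, pdx (fun u => γ u 0 0) w = 2 * γ w 0 0 * G1 w := by
    intro w hw
    have h := hcov w hw 0 0 0
    simp [pd2, conn2, Fin.sum_univ_two] at h
    linarith
  have E00y : ∀ w ∈ U, pdy (fun u => γ u 0 0) w = 0 := by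
    intro w hw
    have h := hcov w hw 0 0 1
    simp [pd2, conn2, Fin.sum_univ_two] at h
    linarith
  have E01x : ∀ w ∈ U, pdx (fun u => γ u 0 1) w = γ w 0 1 * G1 w := by
    intro w hw
    have h := hcov w hw 0 1 0
    simp [pd2, conn2, Fin.sum_univ_two] at h
    linarith
  have E01y : ∀ w ∈ U, pdy (fun u => γ u 0 1) w = γ w 0 1 * G2 w := by
    intro w hw
    have h := hcov w hw 0 1 1
    simp [pd2, conn2, Fin.sum_univ_two] at h
    linarith
  have E11x : ∀ w ∈ U, pdx (fun u => γ u 1 1) w = 0 := by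
    intro w hw
    have h := hcov w hw 1 1 0
    simp [pd2, conn2, Fin.sum_univ_two] at h
    linarith
  have E11y : ∀ w ∈ U, pdy (fun u => γ u 1 1) w = 2 * γ w 1 1 * G2 w := by
    intro w hw
    have h := hcov w hw 1 1 1
    simp [pd2, conn2, Fin.sum_univ_two] at h
    linarith
  intro z hz
  have hmem : U ∈ nhds z := hU.mem_nhds hz
  have cAt : ∀ (a b : Fin 2), ContDiffAt ℝ 2 (fun u => γ u a b) z := by
    intro a b
    exact ((hsm a b).contDiffAt hmem).of_le (WithTop.coe_le_coe.mpr le_top)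
  -- key identity 1 : γ00 * ∂y G1 = 0
  have key1 : γ z 0 0 * pdy G1 z = 0 := by
    have hsymf := mixed_symm (cAt 0 0)
    have h1 : pdy (pdx (fun u => γ u 0 0)) z
        = pdy (fun w => 2 * γ w 0 0 * G1 w) z := by
      unfold pdy
      congr 1
      exact Filter.EventuallyEq.fderiv_eq
        (Filter.eventuallyEq_of_mem hmem (fun w hw => E00x w hw))
    have h2 : pdx (pdy (fun u => γ u 0 0)) z = 0 := by
      unfold pdx
      have : fderiv ℝ (pdy (fun u => γ u 0 0)) z = fderiv ℝ (fun _ => (0:ℝ)) z := by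
        exact Filter.EventuallyEq.fderiv_eq
          (Filter.eventuallyEq_of_mem hmem (fun w hw => E00y w hw))
      rw [this, fderiv_fun_const]
      simp
    have h3 : pdy (fun w => 2 * γ w 0 0 * G1 w) z
        = 2 * γ z 0 0 * pdy G1 z + (2 * pdy (fun u => γ u 0 0) z) * G1 z := by
      rw [pdy_mul ((dγ 0 0 z hz).const_mul 2) (dG1 z hz)]
      have : pdy (fun w => 2 * γ w 0 0) z = 2 * pdy (fun u => γ u 0 0) z := by
        have := pdy_mul (g := fun _ => (2:ℝ)) (h := fun u => γ u 0 0)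
          (differentiableAt_const 2) (dγ 0 0 z hz)
        simpa [pdy, fderiv_fun_const] using this
      rw [this]
    rw [h1, h2, h3, E00y z hz] at hsymf
    linarith
  -- key identity 2 : γ11 * ∂x G2 = 0
  have key2 : γ z 1 1 * pdx G2 z = 0 := by
    have hsymf := mixed_symm (cAt 1 1)
    have h1 : pdx (pdy (fun u => γ u 1 1)) z
        = pdx (fun w => 2 * γ w 1 1 * G2 w) z := by
      unfold pdx
      congr 1
      exact Filter.EventuallyEq.fderiv_eq
        (Filter.eventuallyEq_of_mem hmem (fun w hw => E11y w hw))
    have h2 : pdy (pdx (fun u => γ u 1 1)) z = 0 := by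
      unfold pdy
      have : fderiv ℝ (pdx (fun u => γ u 1 1)) z = fderiv ℝ (fun _ => (0:ℝ)) z := by
        exact Filter.EventuallyEq.fderiv_eq
          (Filter.eventuallyEq_of_mem hmem (fun w hw => E11x w hw))
      rw [this, fderiv_fun_const]
      simp
    have h3 : pdx (fun w => 2 * γ w 1 1 * G2 w) z
        = 2 * γ z 1 1 * pdx G2 z + (2 * pdx (fun u => γ u 1 1) z) * G2 z := by
      rw [pdx_mul ((dγ 1 1 z hz).const_mul 2) (dG2 z hz)]
      have : pdx (fun w => 2 * γ w 1 1) z = 2 * pdx (fun u => γ u 1 1) z := by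
        have := pdx_mul (g := fun _ => (2:ℝ)) (h := fun u => γ u 1 1)
          (differentiableAt_const 2) (dγ 1 1 z hz)
        simpa [pdx, fderiv_fun_const] using this
      rw [this]
    rw [h1, h2, h3, E11x z hz] at hsymf
    linarith
  -- key identity 3 : γ01 * (∂y G1 - ∂x G2) = 0
  have key3 : γ z 0 1 * (pdy G1 z - pdx G2 z) = 0 := by
    have hsymf := mixed_symm (cAt 0 1)
    have h1 : pdy (pdx (fun u => γ u 0 1)) z
        = pdy (fun w => γ w 0 1 * G1 w) z := by
      unfold pdy
      congr 1
      exact Filter.EventuallyEq.fderiv_eq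
        (Filter.eventuallyEq_of_mem hmem (fun w hw => E01x w hw))
    have h2 : pdx (pdy (fun u => γ u 0 1)) z
        = pdx (fun w => γ w 0 1 * G2 w) z := by
      unfold pdx
      congr 1
      exact Filter.EventuallyEq.fderiv_eq
        (Filter.eventuallyEq_of_mem hmem (fun w hw => E01y w hw))
    have h3 : pdy (fun w => γ w 0 1 * G1 w) z
        = γ z 0 1 * pdy G1 z + pdy (fun u => γ u 0 1) z * G1 z :=
      pdy_mul (dγ 0 1 z hz) (dG1 z hz)
    have h4 : pdx (fun w => γ w 0 1 * G2 w) z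
        = γ z 0 1 * pdx G2 z + pdx (fun u => γ u 0 1) z * G2 z :=
      pdx_mul (dγ 0 1 z hz) (dG2 z hz)
    rw [h1, h3, E01y z hz] at hsymf
    rw [h2, h4, E01x z hz] at hsymf
    nlinarith [hsymf]
  -- conclude
  by_cases h01 : γ z 0 1 = 0
  · have hdz := hdet z hz
    rw [hsymm z 1 0, h01] at hdz
    simp [h01] at hdz
    have h00 : γ z 0 0 ≠ 0 := hdz.1
    have h11 : γ z 1 1 ≠ 0 := hdz.2
    have e1 : pdy G1 z = 0 := by
      rcases mul_eq_zero.mp key1 with h | h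
      · exact absurd h h00
      · exact h
    have e2 : pdx G2 z = 0 := by
      rcases mul_eq_zero.mp key2 with h | h
      · exact absurd h h11
      · exact h
    rw [e1, e2]
  · rcases mul_eq_zero.mp key3 with h | h
    · exact absurd h h01
    · linarith
end
end
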